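/- Let (A,(p_l)) be a non-unital Fréchet algebra that is a Montel space, and let n ∈ ℕ, n ≥ 1. If A is (2n−1)-weakly amenable, then the unitization A# is (2n−1)-weakly amenable. -/

import Mathlib

noncomputable section

open Filter Topology

/-- A topological `ℂ`-module `X` equipped with left and right actions of `A`,
each acting by continuous linear maps on `X`.  This is the data underlying a
locally convex `A`-bimodule. -/
structure BiMod (A : Type) : Type 1 where
  X : Type
  [ag : AddCommGroup X]
  [md : Module ℂ X]
  [ts : TopologicalSpace X]
  l : A → X →L[ℂ] X
  r : A → X →L[ℂ] X

attribute [instance] BiMod.ag BiMod.md BiMod.ts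

namespace BiMod

variable {A : Type}

/-- The strong dual of a bimodule, with the canonical dual actions
`⟨a·f, x⟩ = ⟨f, x·a⟩` and `⟨f·a, x⟩ = ⟨f, a·x⟩`.  The dual carries the strong
topology (uniform convergence on von Neumann bounded sets), which is the default
topology on `X →L[ℂ] ℂ` in Mathlib. -/
def dual (M : BiMod A) : BiMod A where
  X := M.X →L[ℂ] ℂ
  l a := ContinuousLinearMap.precomp ℂ (M.r a)
  r a := ContinuousLinearMap.precomp ℂ (M.l a)

/-- The `n`-th iterated strong dual of a bimodule (`iterDual M 0 = M`). -/
def iterDual (M : BiMod A) : ℕ → BiMod A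
  | 0 => M
  | n + 1 => (M.iterDual n).dual

instance dualCSM (M : BiMod A) : ContinuousSMul ℂ (M.dual).X :=
  inferInstanceAs (ContinuousSMul ℂ (M.X →L[ℂ] ℂ))

/-- Evaluation (canonical) embedding of a bimodule into its double dual. -/
def evalEmbed (M : BiMod A) [ContinuousSMul ℂ M.X] (x : M.X) : M.dual.dual.X :=
  show (M.X →L[ℂ] ℂ) →L[ℂ] ℂ from
    ⟨⟨⟨fun f => f x, fun _ _ => rfl⟩, fun _ _ => rfl⟩, continuous_eval_const x⟩

/-- `ContinuousSMul` holds at every level of the iterated dual. -/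
def iterCSM (M : BiMod A) (h : ContinuousSMul ℂ M.X) :
    ∀ n, ContinuousSMul ℂ (M.iterDual n).X
  | 0 => h
  | n + 1 => inferInstanceAs (ContinuousSMul ℂ ((M.iterDual n).X →L[ℂ] ℂ))

/-- The canonical (iterated evaluation) embedding `M → M^(2n)`. -/
def iterEmbed (M : BiMod A) (h : ContinuousSMul ℂ M.X) :
    ∀ n : ℕ, M.X → (M.iterDual (2 * n)).X
  | 0, x => x
  | n + 1, x =>
    haveI := M.iterCSM h (2 * n)
    (M.iterDual (2 * n)).evalEmbed (M.iterEmbed h n x)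

/-- The pairing between the `(k+1)`-st dual and the `k`-th dual. -/
def pairApply (M : BiMod A) (k : ℕ) (F : (M.iterDual (k + 1)).X)
    (x : (M.iterDual k).X) : ℂ := (show (M.iterDual k).X →L[ℂ] ℂ from F) x

end BiMod

section Defs

variable (A : Type) [NonUnitalRing A] [Module ℂ A] [SMulCommClass ℂ A A] [IsScalarTower ℂ A A]
  [TopologicalSpace A] [IsTopologicalAddGroup A] [ContinuousSMul ℂ A] [ContinuousMul A]

/-- A continuous derivation from `A` into a bimodule. -/
def IsContDerivation (M : BiMod A) (D : A →L[ℂ] M.X) : Prop :=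
  ∀ a b : A, D (a * b) = M.l a (D b) + M.r b (D a)

/-- An inner derivation : `D a = a·x - x·a` for some `x`. -/
def IsInnerDerivation (M : BiMod A) (D : A →L[ℂ] M.X) : Prop :=
  ∃ x : M.X, ∀ a : A, D a = M.l a x - M.r a x

/-- `A` as a bimodule over itself, via left/right multiplication. -/
def selfBiMod : BiMod A where
  X := A
  l a := ⟨LinearMap.mulLeft ℂ a, continuous_mul_left a⟩
  r a := ⟨LinearMap.mulRight ℂ a, continuous_mul_right a⟩

/-- `A` is `n`-weakly amenable if every continuous derivation from `A` into the
`n`-th iterated strong dual `A^(n)` (with the canonical module actions) is inner. -/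
def NWeaklyAmenable (n : ℕ) : Prop :=
  ∀ D : A →L[ℂ] ((selfBiMod A).iterDual n).X,
    IsContDerivation A ((selfBiMod A).iterDual n) D →
      IsInnerDerivation A ((selfBiMod A).iterDual n) D

/-- A closed two-sided ideal `I` of `A` (a closed `ℂ`-subalgebra which absorbs
multiplication on both sides) as an `A`-bimodule. -/
def idealBiMod (I : NonUnitalSubalgebra ℂ A)
    (hl : ∀ a : A, ∀ x ∈ I, a * x ∈ I) (hr : ∀ a : A, ∀ x ∈ I, x * a ∈ I) : BiMod A where
  X := ↥I
  l a := ⟨{ toFun := fun x => (⟨a * (x : A), hl a x x.2⟩ : ↥I)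
            map_add' := fun x y => by ext; simp [mul_add]
            map_smul' := fun c x => by ext; simp [mul_smul_comm] },
          (Continuous.subtype_mk ((continuous_mul_left a).comp continuous_subtype_val) _)⟩
  r a := ⟨{ toFun := fun x => (⟨(x : A) * a, hr a x x.2⟩ : ↥I)
            map_add' := fun x y => by ext; simp [add_mul]
            map_smul' := fun c x => by ext; simp [smul_mul_assoc] },
          (Continuous.subtype_mk ((continuous_mul_right a).comp continuous_subtype_val) _)⟩

/-- `A` is `n`-ideally amenable if for every closed two-sided ideal `I` of `A`,
every continuous derivation from `A` into `I^(n)` is inner. -/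
def NIdeallyAmenable (n : ℕ) : Prop :=
  ∀ (I : NonUnitalSubalgebra ℂ A), IsClosed (I : Set A) →
    ∀ (hl : ∀ a : A, ∀ x ∈ I, a * x ∈ I) (hr : ∀ a : A, ∀ x ∈ I, x * a ∈ I),
      ∀ D : A →L[ℂ] ((idealBiMod A I hl hr).iterDual n).X,
        IsContDerivation A ((idealBiMod A I hl hr).iterDual n) D →
          IsInnerDerivation A ((idealBiMod A I hl hr).iterDual n) D

/-- The topology of `A` is generated by an increasing sequence of submultiplicative
seminorms.  Together with completeness and Hausdorffness this says that `A` is a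
Fréchet algebra. -/
def FrechetSeminorms : Prop :=
  ∃ p : SeminormFamily ℂ A ℕ, WithSeminorms p ∧ (∀ n, p n ≤ p (n + 1)) ∧
    ∀ (n : ℕ) (x y : A), p n (x * y) ≤ p n x * p n y

/-- `A` has an identity element. -/
def HasIdentity : Prop := ∃ e : A, ∀ a : A, e * a = a ∧ a * e = a

end Defs

section Montel

variable (E : Type) [AddCommGroup E] [Module ℂ E] [TopologicalSpace E]

/-- A Montel space: a barrelled locally convex Hausdorff space in which every closed
(von Neumann) bounded subset is compact. -/
def IsMontelSpace : Prop :=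
  LocallyConvexSpace ℝ E ∧ T2Space E ∧ BarrelledSpace ℂ E ∧
    ∀ s : Set E, IsClosed s → Bornology.IsVonNBounded ℂ s → IsCompact s

end Montel

section More

variable (A : Type) [NonUnitalRing A] [Module ℂ A] [SMulCommClass ℂ A A] [IsScalarTower ℂ A A]
  [TopologicalSpace A] [IsTopologicalAddGroup A] [ContinuousSMul ℂ A] [ContinuousMul A]

/-- A bounded approximate identity: a bounded net `(e_i)` with `e_i * a → a` and
`a * e_i → a` for every `a`. -/
def HasBoundedApproxIdentity : Prop :=
  ∃ (ι : Type) (_ : Preorder ι) (_ : IsDirected ι (· ≤ ·)) (_ : Nonempty ι) (e : ι → A),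
    Bornology.IsVonNBounded ℂ (Set.range e) ∧
      ∀ a : A, Tendsto (fun i => e i * a) atTop (𝓝 a) ∧
        Tendsto (fun i => a * e i) atTop (𝓝 a)

/-- `A` is essential: the linear span of products is dense. -/
def IsEssential : Prop :=
  Dense ((Submodule.span ℂ {x : A | ∃ a b : A, x = a * b} : Submodule ℂ A) : Set A)

/-- `A` is self-induced: it is essential and every balanced bilinear functional
`φ` (i.e. `φ (a*c) b = φ a (c*b)`) is of the form `φ a b = f (a*b)` for some
continuous linear functional `f`. -/
def SelfInduced : Prop :=
  IsEssential A ∧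
    ∀ φ : A →ₗ[ℂ] A →ₗ[ℂ] ℂ, (∀ a b c : A, φ (a * c) b = φ a (c * b)) →
      ∃ f : A →L[ℂ] ℂ, ∀ a b : A, φ a b = f (a * b)

/-- The data of `M : BiMod A` constitutes a genuine locally convex `A`-bimodule:
the actions satisfy the bimodule laws, are `ℂ`-bilinear, jointly continuous, and
`M.X` is locally convex. -/
structure IsLCBimod (M : BiMod A) : Prop where
  lc : LocallyConvexSpace ℝ M.X
  l_mul : ∀ (a b : A) (x : M.X), M.l (a * b) x = M.l a (M.l b x)
  r_mul : ∀ (a b : A) (x : M.X), M.r (a * b) x = M.r b (M.r a x)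
  l_add : ∀ (a b : A) (x : M.X), M.l (a + b) x = M.l a x + M.l b x
  r_add : ∀ (a b : A) (x : M.X), M.r (a + b) x = M.r a x + M.r b x
  l_smul : ∀ (c : ℂ) (a : A) (x : M.X), M.l (c • a) x = c • M.l a x
  r_smul : ∀ (c : ℂ) (a : A) (x : M.X), M.r (c • a) x = c • M.r a x
  lr_comm : ∀ (a b : A) (x : M.X), M.l a (M.r b x) = M.r b (M.l a x)
  cont_l : Continuous fun q : A × M.X => M.l q.1 q.2
  cont_r : Continuous fun q : A × M.X => M.r q.1 q.2

/-- `A` is amenable: for every locally convex `A`-bimodule `X`, every continuous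
derivation from `A` into the strong dual `X*` (with the canonical dual actions)
is inner. -/
def Amenable : Prop :=
  ∀ M : BiMod A, IsLCBimod A M →
    ∀ D : A →L[ℂ] M.dual.X, IsContDerivation A M.dual D → IsInnerDerivation A M.dual D

end More

section UnitizationInstances

variable (A : Type) [NonUnitalRing A] [Module ℂ A] [SMulCommClass ℂ A A] [IsScalarTower ℂ A A]
  [TopologicalSpace A] [IsTopologicalAddGroup A] [ContinuousSMul ℂ A] [ContinuousMul A]

/-- The unitization `A# = ℂ ⊕ A` carries the product topology, which is the topology
generated by the seminorms `q_l (a, λ) = p_l a + |λ|`. -/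
instance : TopologicalSpace (Unitization ℂ A) :=
  TopologicalSpace.induced Unitization.toProd inferInstance

instance : IsTopologicalAddGroup (Unitization ℂ A) :=
  Topology.IsInducing.topologicalAddGroup (Unitization.addEquiv ℂ A) ⟨rfl⟩

instance : ContinuousSMul ℂ (Unitization ℂ A) :=
  Topology.IsInducing.continuousSMul (g := (Unitization.toProd : Unitization ℂ A → ℂ × A))
    ⟨rfl⟩ continuous_id rfl

instance : ContinuousMul (Unitization ℂ A) where
  continuous_mul := by
    have hi : Topology.IsInducing (Unitization.toProd : Unitization ℂ A → ℂ × A) := ⟨rfl⟩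
    rw [hi.continuous_iff]
    have hc : Continuous fun p : (ℂ × A) × ℂ × A =>
        ((p.1.1 * p.2.1, p.1.1 • p.2.2 + p.2.1 • p.1.2 + p.1.2 * p.2.2) : ℂ × A) := by
      fun_prop
    exact hc.comp (hi.continuous.prodMap hi.continuous)

end UnitizationInstances

section Aux

variable {A : Type} [NonUnitalRing A] [Module ℂ A] [SMulCommClass ℂ A A] [IsScalarTower ℂ A A]
  [TopologicalSpace A] [IsTopologicalAddGroup A] [ContinuousSMul ℂ A] [ContinuousMul A]

local notation "𝔸" => selfBiMod A
local notation "𝔹" => selfBiMod (Unitization ℂ A)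

/-- `A → A#` as a continuous linear map. -/
def inclCLM : A →L[ℂ] Unitization ℂ A :=
  { toFun := Unitization.inr
    map_add' := fun x y => by ext <;> simp
    map_smul' := fun c x => by ext <;> simp
    cont := by
      refine continuous_induced_rng.2 ?_
      show Continuous fun a : A => (((0 : ℂ), a) : ℂ × A)
      exact continuous_const.prodMk continuous_id }

/-- `A# → A` as a continuous linear map. -/
def sndCLM : Unitization ℂ A →L[ℂ] A :=
  { toFun := fun x => x.snd
    map_add' := fun x y => by simp
    map_smul' := fun c x => by simp
    cont := by
      exact continuous_snd.comp continuous_induced_dom }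

/-- `A# → ℂ` as a continuous linear map. -/
def fstCLM : Unitization ℂ A →L[ℂ] ℂ :=
  { toFun := fun x => x.fst
    map_add' := fun x y => by simp
    map_smul' := fun c x => by simp
    cont := by
      exact continuous_fst.comp continuous_induced_dom }

/-- The canonical maps `A^(t) → (A#)^(t)` and `(A#)^(t) → A^(t)` obtained from
the inclusion and projection by iterated transposition. -/
def UV : ∀ t : ℕ,
    (((𝔸).iterDual t).X →L[ℂ] ((𝔹).iterDual t).X) × (((𝔹).iterDual t).X →L[ℂ] ((𝔸).iterDual t).X)
  | 0 => (inclCLM (A := A), sndCLM (A := A))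
  | t + 1 => (ContinuousLinearMap.precomp ℂ (UV t).2, ContinuousLinearMap.precomp ℂ (UV t).1)

def Umap (t : ℕ) : ((𝔸).iterDual t).X →L[ℂ] ((𝔹).iterDual t).X := (UV t).1
def Vmap (t : ℕ) : ((𝔹).iterDual t).X →L[ℂ] ((𝔸).iterDual t).X := (UV t).2

lemma Umap_succ_apply (t : ℕ) (F : ((𝔸).iterDual t).X →L[ℂ] ℂ) :
    Umap (A := A) (t + 1) F = F.comp (Vmap t) := rfl

lemma Vmap_succ_apply (t : ℕ) (F : ((𝔹).iterDual t).X →L[ℂ] ℂ) :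
    Vmap (A := A) (t + 1) F = F.comp (Umap t) := rfl

/-- View an element of the `(t+1)`-st iterated dual as a continuous linear functional. -/
def asCLM {α : Type} (M : BiMod α) (t : ℕ) (F : (M.iterDual (t + 1)).X) :
    (M.iterDual t).X →L[ℂ] ℂ := F

lemma l_dual {α : Type} (M : BiMod α) (t : ℕ) (a : α) (F : (M.iterDual t).X →L[ℂ] ℂ) :
    (M.iterDual (t + 1)).l a F = F.comp ((M.iterDual t).r a) := rfl

lemma r_dual {α : Type} (M : BiMod α) (t : ℕ) (a : α) (F : (M.iterDual t).X →L[ℂ] ℂ) :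
    (M.iterDual (t + 1)).r a F = F.comp ((M.iterDual t).l a) := rfl

lemma VU : ∀ (t : ℕ) (F : ((𝔸).iterDual t).X), Vmap t (Umap t F) = F
  | 0, F => by
    rfl
  | t + 1, F => by
    refine ContinuousLinearMap.ext fun x => ?_
    exact congrArg (⇑(asCLM 𝔸 t F)) (VU t x)

/-- View elements at level `0` at their native types. -/
def asU (x : ((𝔹).iterDual 0).X) : Unitization ℂ A := x
def asA0 (x : ((𝔸).iterDual 0).X) : A := x

lemma S_zero :
    (∀ (a : A) (x : ((𝔸).iterDual 0).X),
        Umap 0 (((𝔸).iterDual 0).l a x) = ((𝔹).iterDual 0).l (Unitization.inr a) (Umap 0 x)) ∧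
    (∀ (a : A) (x : ((𝔸).iterDual 0).X),
        Umap 0 (((𝔸).iterDual 0).r a x) = ((𝔹).iterDual 0).r (Unitization.inr a) (Umap 0 x))
 := by
  constructor <;> intro a x
  · show (Unitization.inr (a * asA0 x) : Unitization ℂ A)
        = Unitization.inr a * Unitization.inr (asA0 x)
    exact Unitization.inr_mul ℂ a (asA0 x)
  · show (Unitization.inr (asA0 x * a) : Unitization ℂ A)
        = Unitization.inr (asA0 x) * Unitization.inr a
    exact Unitization.inr_mul ℂ (asA0 x) a

lemma R_of_S (t : ℕ)
    (hSl : ∀ (a : A) (x : ((𝔸).iterDual t).X),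
        Umap t (((𝔸).iterDual t).l a x) = ((𝔹).iterDual t).l (Unitization.inr a) (Umap t x))
    (hSr : ∀ (a : A) (x : ((𝔸).iterDual t).X),
        Umap t (((𝔸).iterDual t).r a x) = ((𝔹).iterDual t).r (Unitization.inr a) (Umap t x)) :
    (∀ (a : A) (F : ((𝔹).iterDual (t+1)).X),
        Vmap (t+1) (((𝔹).iterDual (t+1)).l (Unitization.inr a) F)
          = ((𝔸).iterDual (t+1)).l a (Vmap (t+1) F)) ∧
    (∀ (a : A) (F : ((𝔹).iterDual (t+1)).X),
        Vmap (t+1) (((𝔹).iterDual (t+1)).r (Unitization.inr a) F)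
          = ((𝔸).iterDual (t+1)).r a (Vmap (t+1) F)) := by
  constructor
  · intro a F
    refine ContinuousLinearMap.ext fun x => ?_
    exact (congrArg (⇑(asCLM 𝔹 t F)) (hSr a x)).symm
  · intro a F
    refine ContinuousLinearMap.ext fun x => ?_
    exact (congrArg (⇑(asCLM 𝔹 t F)) (hSl a x)).symm

lemma S_of_R (t : ℕ)
    (hRl : ∀ (a : A) (F : ((𝔹).iterDual t).X),
        Vmap t (((𝔹).iterDual t).l (Unitization.inr a) F) = ((𝔸).iterDual t).l a (Vmap t F))
    (hRr : ∀ (a : A) (F : ((𝔹).iterDual t).X),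
        Vmap t (((𝔹).iterDual t).r (Unitization.inr a) F) = ((𝔸).iterDual t).r a (Vmap t F)) :
    (∀ (a : A) (x : ((𝔸).iterDual (t+1)).X),
        Umap (t+1) (((𝔸).iterDual (t+1)).l a x)
          = ((𝔹).iterDual (t+1)).l (Unitization.inr a) (Umap (t+1) x)) ∧
    (∀ (a : A) (x : ((𝔸).iterDual (t+1)).X),
        Umap (t+1) (((𝔸).iterDual (t+1)).r a x)
          = ((𝔹).iterDual (t+1)).r (Unitization.inr a) (Umap (t+1) x)) := by
  constructor
  · intro a F
    refine ContinuousLinearMap.ext fun x => ?_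
    exact congrArg (⇑(asCLM 𝔸 t F)) ((hRr a x).symm)
  · intro a F
    refine ContinuousLinearMap.ext fun x => ?_
    exact congrArg (⇑(asCLM 𝔸 t F)) ((hRl a x).symm)

lemma S_even : ∀ t : ℕ,
    (∀ (a : A) (x : ((𝔸).iterDual (2*t)).X),
        Umap (2*t) (((𝔸).iterDual (2*t)).l a x)
          = ((𝔹).iterDual (2*t)).l (Unitization.inr a) (Umap (2*t) x)) ∧
    (∀ (a : A) (x : ((𝔸).iterDual (2*t)).X),
        Umap (2*t) (((𝔸).iterDual (2*t)).r a x)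
          = ((𝔹).iterDual (2*t)).r (Unitization.inr a) (Umap (2*t) x))
  | 0 => S_zero
  | t + 1 =>
    S_of_R (2*t+1)
      (R_of_S (2*t) (S_even t).1 (S_even t).2).1
      (R_of_S (2*t) (S_even t).1 (S_even t).2).2

lemma R_odd (t : ℕ) :
    (∀ (a : A) (F : ((𝔹).iterDual (2*t+1)).X),
        Vmap (2*t+1) (((𝔹).iterDual (2*t+1)).l (Unitization.inr a) F)
          = ((𝔸).iterDual (2*t+1)).l a (Vmap (2*t+1) F)) ∧
    (∀ (a : A) (F : ((𝔹).iterDual (2*t+1)).X),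
        Vmap (2*t+1) (((𝔹).iterDual (2*t+1)).r (Unitization.inr a) F)
          = ((𝔸).iterDual (2*t+1)).r a (Vmap (2*t+1) F)) :=
  R_of_S (2*t) (S_even t).1 (S_even t).2

lemma Kfacts : ∀ (t : ℕ) (a : A),
    (∃ Y : ((𝔹).iterDual (2*t)).X →L[ℂ] ((𝔸).iterDual (2*t)).X,
        ((𝔹).iterDual (2*t)).l (Unitization.inr a) = (Umap (2*t)).comp Y) ∧
    (∃ Y : ((𝔹).iterDual (2*t)).X →L[ℂ] ((𝔸).iterDual (2*t)).X,
        ((𝔹).iterDual (2*t)).r (Unitization.inr a) = (Umap (2*t)).comp Y)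
  | 0, a => by
    constructor
    · refine ⟨fstCLM.smulRight a + (((𝔸).l a).comp (sndCLM (A := A))), ?_⟩
      refine ContinuousLinearMap.ext fun x => ?_
      show Unitization.inr a * asU x
          = Unitization.inr ((asU x).fst • a + a * (asU x).snd)
      ext <;> simp
    · refine ⟨fstCLM.smulRight a + (((𝔸).r a).comp (sndCLM (A := A))), ?_⟩
      refine ContinuousLinearMap.ext fun x => ?_
      show asU x * Unitization.inr a
          = Unitization.inr ((asU x).fst • a + (asU x).snd * a)
      ext <;> simp
  | t + 1, a => by
    obtain ⟨⟨Yl, hYl⟩, ⟨Yr, hYr⟩⟩ := Kfacts t a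
    constructor
    · refine ⟨ContinuousLinearMap.precomp ℂ (ContinuousLinearMap.precomp ℂ Yl), ?_⟩
      refine ContinuousLinearMap.ext fun xh => ContinuousLinearMap.ext fun G => ?_
      refine congrArg (⇑(asCLM 𝔹 (2*t+1) xh)) ?_
      show (asCLM 𝔹 (2*t) G).comp (((𝔹).iterDual (2*t)).l (Unitization.inr a))
          = ((asCLM 𝔹 (2*t) G).comp (Umap (2*t))).comp Yl
      rw [hYl]
      rfl
    · refine ⟨ContinuousLinearMap.precomp ℂ (ContinuousLinearMap.precomp ℂ Yr), ?_⟩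
      refine ContinuousLinearMap.ext fun xh => ContinuousLinearMap.ext fun G => ?_
      refine congrArg (⇑(asCLM 𝔹 (2*t+1) xh)) ?_
      show (asCLM 𝔹 (2*t) G).comp (((𝔹).iterDual (2*t)).r (Unitization.inr a))
          = ((asCLM 𝔹 (2*t) G).comp (Umap (2*t))).comp Yr
      rw [hYr]
      rfl

lemma annihilate (t : ℕ) (F : ((𝔹).iterDual (2*t)).X →L[ℂ] ℂ)
    (hF : F.comp (Umap (2*t)) = 0) (a : A) :
    ((𝔹).iterDual (2*t+1)).l (Unitization.inr a) F = 0 ∧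
    ((𝔹).iterDual (2*t+1)).r (Unitization.inr a) F = 0 := by
  obtain ⟨⟨Yl, hYl⟩, ⟨Yr, hYr⟩⟩ := Kfacts t a
  constructor
  · show F.comp (((𝔹).iterDual (2*t)).r (Unitization.inr a)) = 0
    rw [hYr, ← ContinuousLinearMap.comp_assoc, hF, ContinuousLinearMap.zero_comp]
  · show F.comp (((𝔹).iterDual (2*t)).l (Unitization.inr a)) = 0
    rw [hYl, ← ContinuousLinearMap.comp_assoc, hF, ContinuousLinearMap.zero_comp]

def toXA0 (a : A) : ((𝔸).iterDual 0).X := a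

/-- `TopologicalAddGroup` at every level of the iterated dual. -/
def iterTAG {α : Type} (M : BiMod α) (h : IsTopologicalAddGroup M.X) :
    ∀ n, IsTopologicalAddGroup (M.iterDual n).X
  | 0 => h
  | n + 1 => inferInstanceAs (IsTopologicalAddGroup ((M.iterDual n).X →L[ℂ] ℂ))

/-- Canonical image of an element of `A#` in the even iterated duals. -/
def bhat : ∀ t : ℕ, Unitization ℂ A → ((𝔹).iterDual (2*t)).X
  | 0, x => x
  | t + 1, x =>
    letI := ((𝔹).iterCSM (inferInstanceAs (ContinuousSMul ℂ (Unitization ℂ A))) (2*t))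
    ((𝔹).iterDual (2*t)).evalEmbed (bhat t x)

/-- Canonical image of an element of `A` in the even iterated duals. -/
def ahat : ∀ t : ℕ, A → ((𝔸).iterDual (2*t)).X
  | 0, x => x
  | t + 1, x =>
    letI := ((𝔸).iterCSM (inferInstanceAs (ContinuousSMul ℂ A)) (2*t))
    ((𝔸).iterDual (2*t)).evalEmbed (ahat t x)

/-- The iterated images `e**` of the functional `e* = fst` in the odd duals of `A#`. -/
def Estar : ∀ t : ℕ, ((𝔹).iterDual (2*t)).X →L[ℂ] ℂ
  | 0 => fstCLM
  | t + 1 =>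
    letI := ((𝔹).iterCSM (inferInstanceAs (ContinuousSMul ℂ (Unitization ℂ A))) (2*t+1))
    ((𝔹).iterDual (2*t+1)).evalEmbed (Estar t)

/-- The iterated images of a functional `f ∈ A'` in the odd duals of `A`. -/
def Ffam (f : A →L[ℂ] ℂ) : ∀ t : ℕ, ((𝔸).iterDual (2*t)).X →L[ℂ] ℂ
  | 0 => f
  | t + 1 =>
    letI := ((𝔸).iterCSM (inferInstanceAs (ContinuousSMul ℂ A)) (2*t+1))
    ((𝔸).iterDual (2*t+1)).evalEmbed (Ffam f t)

lemma Estar_bhat_one : ∀ t : ℕ, Estar (A := A) t (bhat t 1) = 1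
  | 0 => by
    show (1 : Unitization ℂ A).fst = 1
    exact Unitization.fst_one
  | t + 1 => Estar_bhat_one t

lemma Ffam_ahat (f : A →L[ℂ] ℂ) : ∀ (t : ℕ) (y : A), Ffam f t (ahat t y) = f y
  | 0, y => rfl
  | t + 1, y => Ffam_ahat f t y

lemma Estar_comp_U : ∀ t : ℕ, (Estar (A := A) t).comp (Umap (2*t)) = 0
  | 0 => by
    refine ContinuousLinearMap.ext fun x => ?_
    show (Unitization.inr (asA0 x) : Unitization ℂ A).fst = 0
    simp
  | t + 1 => by
    refine ContinuousLinearMap.ext fun y => ?_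
    show (asCLM 𝔸 (2*t+1) y) (Vmap (2*t+1) (Estar t)) = 0
    have hV : Vmap (2*t+1) (Estar (A := A) t) = 0 := Estar_comp_U t
    rw [hV]
    exact map_zero _

lemma V_bhat_one : ∀ t : ℕ, Vmap (A := A) (2*t) (bhat t 1) = 0
  | 0 => by
    show (1 : Unitization ℂ A).snd = 0
    exact Unitization.snd_one
  | t + 1 => by
    refine ContinuousLinearMap.ext fun y => ?_
    show (asCLM 𝔸 (2*t) y) (Vmap (2*t) (bhat t 1)) = 0
    rw [V_bhat_one t]
    exact map_zero _

lemma kerChar (t : ℕ)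
    (hdec : ∀ x : ((𝔹).iterDual (2*t)).X,
      ∃ (y : ((𝔸).iterDual (2*t)).X) (c : ℂ), x = Umap (2*t) y + c • bhat t 1)
    (G : ((𝔹).iterDual (2*t)).X →L[ℂ] ℂ) (hG : G.comp (Umap (2*t)) = 0) :
    G = G (bhat t 1) • Estar t := by
  refine ContinuousLinearMap.ext fun x => ?_
  obtain ⟨y, c, rfl⟩ := hdec x
  have h1 : G (Umap (2*t) y) = 0 := by
    have := congrArg (fun (L : ((𝔸).iterDual (2*t)).X →L[ℂ] ℂ) => L y) hG
    simpa using this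
  have h2 : Estar (A := A) t (Umap (2*t) y) = 0 := by
    have := congrArg (fun (L : ((𝔸).iterDual (2*t)).X →L[ℂ] ℂ) => L y) (Estar_comp_U t)
    simpa using this
  rw [map_add, map_add, map_smul, map_smul, h1, ContinuousLinearMap.smul_apply,
    ContinuousLinearMap.smul_apply, h2, Estar_bhat_one t]
  simp [smul_eq_mul]

lemma dec : ∀ (t : ℕ) (x : ((𝔹).iterDual (2*t)).X),
    ∃ (y : ((𝔸).iterDual (2*t)).X) (c : ℂ), x = Umap (2*t) y + c • bhat t 1
  | 0, x => by
    refine ⟨toXA0 ((asU x).snd), (asU x).fst, ?_⟩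
    show asU x = Unitization.inr ((asU x).snd)
        + (asU x).fst • (1 : Unitization ℂ A)
    have e : ∀ y : Unitization ℂ A, y = Unitization.inr (y.snd) + y.fst • (1 : Unitization ℂ A) := fun y => by ext <;> simp
    exact e (asU x)
  | t + 1, x => by
    refine ⟨(asCLM 𝔹 (2*t+1) x).comp (Umap (2*t+1)), asCLM 𝔹 (2*t+1) x (Estar t), ?_⟩
    refine ContinuousLinearMap.ext fun G => ?_
    set G' : ((𝔹).iterDual (2*t)).X →L[ℂ] ℂ :=
      asCLM 𝔹 (2*t) G - asCLM 𝔹 (2*t) (Umap (2*t+1) (Vmap (2*t+1) G)) with hG'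
    have hker : G'.comp (Umap (2*t)) = 0 := by
      rw [hG', ContinuousLinearMap.sub_comp]
      have heq : (asCLM 𝔹 (2*t) (Umap (2*t+1) (Vmap (2*t+1) G))).comp (Umap (2*t))
          = (asCLM 𝔹 (2*t) G).comp (Umap (2*t)) := by
        refine ContinuousLinearMap.ext fun y => ?_
        exact congrArg (⇑(asCLM 𝔸 (2*t) (Vmap (2*t+1) G))) (VU (2*t) y)
      rw [heq, sub_self]
    have hchar := kerChar t (dec t) G' hker
    have hGe : G' (bhat t 1) = asCLM 𝔹 (2*t) G (bhat t 1) := by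
      rw [hG']
      have e0 : asCLM 𝔹 (2*t) (Umap (2*t+1) (Vmap (2*t+1) G)) (bhat t 1)
          = asCLM 𝔸 (2*t) (Vmap (2*t+1) G) (Vmap (2*t) (bhat t 1)) := rfl
      rw [ContinuousLinearMap.sub_apply, e0, V_bhat_one t, map_zero, sub_zero]
    have e1 : asCLM 𝔹 (2*t+1) (Umap (2*t+2) ((asCLM 𝔹 (2*t+1) x).comp (Umap (2*t+1)))) G
        = asCLM 𝔹 (2*t+1) x (Umap (2*t+1) (Vmap (2*t+1) G)) := rfl
    have e2 : asCLM 𝔹 (2*t+1) (bhat (t+1) 1) G = asCLM 𝔹 (2*t) G (bhat t 1) := rfl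
    show asCLM 𝔹 (2*t+1) x G
        = (asCLM 𝔹 (2*t+1) (Umap (2*t+2) ((asCLM 𝔹 (2*t+1) x).comp (Umap (2*t+1))))
            + asCLM 𝔹 (2*t+1) x (Estar t) • asCLM 𝔹 (2*t+1) (bhat (t+1) 1)) G
    rw [ContinuousLinearMap.add_apply, ContinuousLinearMap.smul_apply, e1, e2]
    have hsum : asCLM 𝔹 (2*t) G = asCLM 𝔹 (2*t) (Umap (2*t+1) (Vmap (2*t+1) G)) + G' := by
      rw [hG']; abel
    have expand := congrArg (⇑(asCLM 𝔹 (2*t+1) x)) hsum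
    erw [map_add] at expand
    have hval : asCLM 𝔹 (2*t+1) x G'
        = asCLM 𝔹 (2*t) G (bhat t 1) * asCLM 𝔹 (2*t+1) x (Estar t) := by
      erw [hchar, hGe, map_smul, smul_eq_mul]
    have ecoe : asCLM 𝔹 (2*t+1) x (asCLM 𝔹 (2*t) G) = asCLM 𝔹 (2*t+1) x G := rfl
    rw [ecoe] at expand
    have ecoe2 : asCLM 𝔹 (2*t+1) x (asCLM 𝔹 (2*t) (Umap (2*t+1) (Vmap (2*t+1) G)))
        = asCLM 𝔹 (2*t+1) x (Umap (2*t+1) (Vmap (2*t+1) G)) := rfl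
    rw [ecoe2] at expand
    rw [expand, hval, smul_eq_mul]
    ring

lemma bhat_l : ∀ (t : ℕ) (b x : Unitization ℂ A),
    ((𝔹).iterDual (2*t)).l b (bhat t x) = bhat t (b * x)
  | 0, b, x => rfl
  | t + 1, b, x => by
    refine ContinuousLinearMap.ext fun f => ?_
    exact congrArg (⇑(asCLM 𝔹 (2*t) f)) (bhat_l t b x)

lemma bhat_r : ∀ (t : ℕ) (b x : Unitization ℂ A),
    ((𝔹).iterDual (2*t)).r b (bhat t x) = bhat t (x * b)
  | 0, b, x => rfl
  | t + 1, b, x => by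
    refine ContinuousLinearMap.ext fun f => ?_
    exact congrArg (⇑(asCLM 𝔹 (2*t) f)) (bhat_r t b x)

lemma ahat_l : ∀ (t : ℕ) (b x : A), ((𝔸).iterDual (2*t)).l b (ahat t x) = ahat t (b * x)
  | 0, b, x => rfl
  | t + 1, b, x => by
    refine ContinuousLinearMap.ext fun f => ?_
    exact congrArg (⇑(asCLM 𝔸 (2*t) f)) (ahat_l t b x)

lemma ahat_r : ∀ (t : ℕ) (b x : A), ((𝔸).iterDual (2*t)).r b (ahat t x) = ahat t (x * b)
  | 0, b, x => rfl
  | t + 1, b, x => by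
    refine ContinuousLinearMap.ext fun f => ?_
    exact congrArg (⇑(asCLM 𝔸 (2*t) f)) (ahat_r t b x)

lemma Ffam_l_zero (f : A →L[ℂ] ℂ) : ∀ (t : ℕ) (a : A), (∀ x : A, f (x * a) = 0) →
    ((𝔸).iterDual (2*t+1)).l a (Ffam f t) = 0
  | 0, a, h => by
    refine ContinuousLinearMap.ext fun x => ?_
    show f (asA0 x * a) = (0 : ℂ)
    exact h (asA0 x)
  | t + 1, a, h => by
    refine ContinuousLinearMap.ext fun g => ?_
    show (asCLM 𝔸 (2*t+1) g) (((𝔸).iterDual (2*t+1)).l a (Ffam f t)) = (0 : ℂ)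
    rw [Ffam_l_zero f t a h]
    exact map_zero _

lemma Ffam_r_zero (f : A →L[ℂ] ℂ) : ∀ (t : ℕ) (a : A), (∀ x : A, f (a * x) = 0) →
    ((𝔸).iterDual (2*t+1)).r a (Ffam f t) = 0
  | 0, a, h => by
    refine ContinuousLinearMap.ext fun x => ?_
    show f (a * asA0 x) = (0 : ℂ)
    exact h (asA0 x)
  | t + 1, a, h => by
    refine ContinuousLinearMap.ext fun g => ?_
    show (asCLM 𝔸 (2*t+1) g) (((𝔸).iterDual (2*t+1)).r a (Ffam f t)) = (0 : ℂ)
    rw [Ffam_r_zero f t a h]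
    exact map_zero _

lemma law_one : ∀ t : ℕ,
    (∀ F : ((𝔹).iterDual t).X, ((𝔹).iterDual t).l 1 F = F) ∧
    (∀ F : ((𝔹).iterDual t).X, ((𝔹).iterDual t).r 1 F = F)
  | 0 => ⟨fun F => one_mul (asU F), fun F => mul_one (asU F)⟩
  | t + 1 => by
    constructor <;> intro F <;> refine ContinuousLinearMap.ext fun z => ?_
    · exact congrArg (⇑(asCLM 𝔹 t F)) ((law_one t).2 z)
    · exact congrArg (⇑(asCLM 𝔹 t F)) ((law_one t).1 z)

lemma law_mul : ∀ t : ℕ,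
    (∀ (x y : Unitization ℂ A) (F : ((𝔹).iterDual t).X),
      ((𝔹).iterDual t).l (x * y) F = ((𝔹).iterDual t).l x (((𝔹).iterDual t).l y F)) ∧
    (∀ (x y : Unitization ℂ A) (F : ((𝔹).iterDual t).X),
      ((𝔹).iterDual t).r (x * y) F = ((𝔹).iterDual t).r y (((𝔹).iterDual t).r x F))
  | 0 => ⟨fun x y F => mul_assoc x y (asU F), fun x y F => (mul_assoc (asU F) x y).symm⟩
  | t + 1 => by
    constructor <;> intro x y F <;> refine ContinuousLinearMap.ext fun z => ?_
    · exact congrArg (⇑(asCLM 𝔹 t F)) ((law_mul t).2 x y z)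
    · exact congrArg (⇑(asCLM 𝔹 t F)) ((law_mul t).1 x y z)

lemma law_comm : ∀ (t : ℕ) (x y : Unitization ℂ A) (F : ((𝔹).iterDual t).X),
    ((𝔹).iterDual t).l x (((𝔹).iterDual t).r y F)
      = ((𝔹).iterDual t).r y (((𝔹).iterDual t).l x F)
  | 0, x, y, F => (mul_assoc x (asU F) y).symm
  | t + 1, x, y, F => by
    refine ContinuousLinearMap.ext fun z => ?_
    exact congrArg (⇑(asCLM 𝔹 t F)) (law_comm t y x z)

lemma law_add : ∀ t : ℕ,
    (∀ (x y : Unitization ℂ A) (F : ((𝔹).iterDual t).X),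
      ((𝔹).iterDual t).l (x + y) F = ((𝔹).iterDual t).l x F + ((𝔹).iterDual t).l y F) ∧
    (∀ (x y : Unitization ℂ A) (F : ((𝔹).iterDual t).X),
      ((𝔹).iterDual t).r (x + y) F = ((𝔹).iterDual t).r x F + ((𝔹).iterDual t).r y F)
  | 0 => ⟨fun x y F => add_mul x y (asU F), fun x y F => mul_add (asU F) x y⟩
  | t + 1 => by
    constructor <;> intro x y F <;> refine ContinuousLinearMap.ext fun z => ?_
    · show (asCLM 𝔹 t F) (((𝔹).iterDual t).r (x + y) z)
          = (asCLM 𝔹 t F) (((𝔹).iterDual t).r x z)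
            + (asCLM 𝔹 t F) (((𝔹).iterDual t).r y z)
      rw [(law_add t).2 x y z, map_add]
    · show (asCLM 𝔹 t F) (((𝔹).iterDual t).l (x + y) z)
          = (asCLM 𝔹 t F) (((𝔹).iterDual t).l x z)
            + (asCLM 𝔹 t F) (((𝔹).iterDual t).l y z)
      rw [(law_add t).1 x y z, map_add]

lemma law_smul : ∀ t : ℕ,
    (∀ (c : ℂ) (x : Unitization ℂ A) (F : ((𝔹).iterDual t).X),
      ((𝔹).iterDual t).l (c • x) F = c • ((𝔹).iterDual t).l x F) ∧
    (∀ (c : ℂ) (x : Unitization ℂ A) (F : ((𝔹).iterDual t).X),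
      ((𝔹).iterDual t).r (c • x) F = c • ((𝔹).iterDual t).r x F)
  | 0 => ⟨fun c x F => smul_mul_assoc c x (asU F), fun c x F => mul_smul_comm c (asU F) x⟩
  | t + 1 => by
    constructor <;> intro c x F <;> refine ContinuousLinearMap.ext fun z => ?_
    · show (asCLM 𝔹 t F) (((𝔹).iterDual t).r (c • x) z)
          = c • (asCLM 𝔹 t F) (((𝔹).iterDual t).r x z)
      rw [(law_smul t).2 c x z, map_smul]
    · show (asCLM 𝔹 t F) (((𝔹).iterDual t).l (c • x) z)
          = c • (asCLM 𝔹 t F) (((𝔹).iterDual t).l x z)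
      rw [(law_smul t).1 c x z, map_smul]

lemma dense_products (hlc : LocallyConvexSpace ℝ A) (m : ℕ)
    (h : NWeaklyAmenable A (2*m+1)) :
    Dense ((Submodule.span ℂ {x : A | ∃ a b : A, x = a * b} : Submodule ℂ A) : Set A) := by
  by_contra hd
  set S := (Submodule.span ℂ {x : A | ∃ a b : A, x = a * b}).topologicalClosure with hSdef
  have hScoe : (S : Set A)
      = closure ((Submodule.span ℂ {x : A | ∃ a b : A, x = a * b} : Submodule ℂ A) : Set A) :=
    Submodule.topologicalClosure_coe _
  have hSc : IsClosed (S : Set A) := Submodule.isClosed_topologicalClosure _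
  have hne : S ≠ ⊤ := by
    intro hTop
    apply hd
    rw [dense_iff_closure_eq, ← hScoe, hTop]
    rfl
  obtain ⟨a₀, ha₀⟩ : ∃ a₀ : A, a₀ ∉ S := by
    by_contra hall
    push_neg at hall
    exact hne (Submodule.eq_top_iff'.2 hall)
  have coe_smul : ∀ (r : ℝ) (x : A), (r : ℂ) • x = r • x := fun r x => by
    rw [← smul_one_smul ℂ r x, Complex.real_smul, mul_one]
  haveI : ContinuousSMul ℝ A := by
    refine ⟨?_⟩
    have e : (fun p : ℝ × A => p.1 • p.2) = fun p : ℝ × A => ((p.1 : ℂ)) • p.2 := by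
      funext p; rw [coe_smul]
    rw [e]
    exact (Complex.continuous_ofReal.comp continuous_fst).smul continuous_snd
  have hconv : Convex ℝ (S : Set A) := by
    intro u hu v hv a b _ _ _
    refine S.add_mem ?_ ?_
    · rw [← coe_smul]; exact S.smul_mem _ hu
    · rw [← coe_smul]; exact S.smul_mem _ hv
  obtain ⟨g, u, hgu, hgS⟩ := geometric_hahn_banach_point_closed hconv hSc ha₀
  have hu0 : u < 0 := by
    have h0 := hgS 0 S.zero_mem
    rw [map_zero] at h0
    exact h0
  have hgS0 : ∀ b ∈ S, g b = 0 := by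
    intro b hb
    by_contra hgb
    have hmem : ((2*u / g b : ℝ)) • b ∈ S := by
      rw [← coe_smul]; exact S.smul_mem _ hb
    have h2 := hgS _ hmem
    rw [map_smul, smul_eq_mul, div_mul_cancel₀ _ hgb] at h2
    linarith
  have hga0 : g a₀ ≠ 0 := by
    have := hgu
    intro h0
    rw [h0] at this
    linarith
  -- complexification of `g`
  set φ : A → ℂ := fun x => (g x : ℂ) - Complex.I * (g (Complex.I • x) : ℂ) with hφ
  have φ_add : ∀ x y, φ (x + y) = φ x + φ y := by
    intro x y
    simp only [hφ, smul_add, map_add]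
    push_cast
    ring
  have φ_real : ∀ (r : ℝ) (x : A), φ (r • x) = r * φ x := by
    intro r x
    have e : Complex.I • (r • x) = r • (Complex.I • x) := smul_comm _ _ _
    simp only [hφ, e, map_smul, smul_eq_mul]
    push_cast
    ring
  have φ_I : ∀ x, φ (Complex.I • x) = Complex.I * φ x := by
    intro x
    have e : Complex.I • (Complex.I • x) = -x := by
      rw [smul_smul, Complex.I_mul_I, neg_one_smul]
    simp only [hφ, e, map_neg]
    push_cast
    linear_combination (g (Complex.I • x) : ℂ) * Complex.I_sq
  have φ_smul : ∀ (c : ℂ) (x : A), φ (c • x) = c * φ x := by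
    intro c x
    have hc : (c.re : ℂ) + (c.im : ℂ) * Complex.I = c := Complex.re_add_im c
    have hdecomp : c • x = (c.re : ℝ) • x + (c.im : ℝ) • (Complex.I • x) := by
      calc c • x = ((c.re : ℂ) + (c.im : ℂ) * Complex.I) • x := by rw [hc]
        _ = (c.re : ℂ) • x + ((c.im : ℂ) * Complex.I) • x := add_smul _ _ _
        _ = (c.re : ℝ) • x + (c.im : ℝ) • (Complex.I • x) := by
            rw [coe_smul, mul_smul, coe_smul]
    rw [hdecomp, φ_add, φ_real, φ_real, φ_I]
    linear_combination (φ x) * hc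
  set fc : A →L[ℂ] ℂ :=
    { toFun := φ
      map_add' := φ_add
      map_smul' := fun c x => by simpa using φ_smul c x
      cont := by
        refine Continuous.sub (Complex.continuous_ofReal.comp g.continuous) ?_
        exact continuous_const.mul (Complex.continuous_ofReal.comp
          (g.continuous.comp (continuous_const_smul Complex.I))) } with hfc
  have hfcS : ∀ b ∈ S, fc b = 0 := by
    intro b hb
    show φ b = 0
    rw [hφ]
    simp only [hgS0 b hb, hgS0 _ (S.smul_mem Complex.I hb)]
    simp
  have hfca₀ : fc a₀ ≠ 0 := by
    intro h0
    apply hga0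
    have hre : (fc a₀).re = g a₀ := by
      show (φ a₀).re = g a₀
      rw [hφ]
      simp
    rw [← hre, h0]
    simp
  have hprod0 : ∀ x y : A, fc (x * y) = 0 := fun x y =>
    hfcS _ (Submodule.le_topologicalClosure _ (Submodule.subset_span ⟨x, y, rfl⟩))
  -- the bad derivation
  set F₀ : ((𝔸).iterDual (2*m)).X →L[ℂ] ℂ := Ffam fc m with hF₀
  set Dbad : A →L[ℂ] (((𝔸).iterDual (2*m)).X →L[ℂ] ℂ) :=
    ContinuousLinearMap.smulRight fc F₀ with hDbad
  have hder : IsContDerivation A ((𝔸).iterDual (2*m+1)) Dbad := by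
    intro a b
    have hz : (0:ℂ) • F₀ = (0 : ((𝔸).iterDual (2*m)).X →L[ℂ] ℂ) := zero_smul ℂ F₀
    show (fc (a*b)) • F₀
        = ((𝔸).iterDual (2*m+1)).l a (fc b • F₀) + ((𝔸).iterDual (2*m+1)).r b (fc a • F₀)
    erw [hprod0 a b, hz, map_smul, map_smul, hF₀,
      Ffam_l_zero fc m a (fun x => hprod0 x a), Ffam_r_zero fc m b (fun x => hprod0 b x),
      smul_zero, smul_zero, add_zero]
    rfl
  have hInner : ∃ x : ((𝔸).iterDual (2*m+1)).X, ∀ a : A,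
      Dbad a = ((𝔸).iterDual (2*m+1)).l a x - ((𝔸).iterDual (2*m+1)).r a x := h Dbad hder
  obtain ⟨G, hG⟩ := hInner
  have hGa : Dbad a₀ = asCLM 𝔸 (2*m)
      (((𝔸).iterDual (2*m+1)).l a₀ G - ((𝔸).iterDual (2*m+1)).r a₀ G) := hG a₀
  have e1 : Dbad a₀ (ahat m a₀) = fc a₀ * fc a₀ := by
    show fc a₀ • (Ffam fc m (ahat m a₀)) = fc a₀ * fc a₀
    rw [Ffam_ahat fc m a₀, smul_eq_mul]
  have final : fc a₀ * fc a₀ = 0 := by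
    rw [← e1, hGa]
    show (asCLM 𝔸 (2*m) G) (((𝔸).iterDual (2*m)).r a₀ (ahat m a₀))
        - (asCLM 𝔸 (2*m) G) (((𝔸).iterDual (2*m)).l a₀ (ahat m a₀)) = 0
    rw [ahat_r, ahat_l, sub_self]
  exact hfca₀ (mul_self_eq_zero.mp final)


set_option maxHeartbeats 2000000 in
set_option synthInstance.maxHeartbeats 1000000 in
lemma main_key (m : ℕ)
    (D : Unitization ℂ A →L[ℂ] (((𝔹).iterDual (2*m)).X →L[ℂ] ℂ))
    (hD' : ∀ x y : Unitization ℂ A,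
      D (x * y) = ((𝔹).iterDual (2*m+1)).l x (D y) + ((𝔹).iterDual (2*m+1)).r y (D x))
    (f : ((𝔸).iterDual (2*m+1)).X)
    (hf : ∀ a : A, Vmap (2*m+1) (D (Unitization.inr a))
        = ((𝔸).iterDual (2*m+1)).l a f - ((𝔸).iterDual (2*m+1)).r a f)
    (hdense : Dense ((Submodule.span ℂ {x : A | ∃ a b : A, x = a * b} : Submodule ℂ A) : Set A)) :
    ∀ x : Unitization ℂ A,
      D x = ((𝔹).iterDual (2*m+1)).l x (Umap (2*m+1) f)
            - ((𝔹).iterDual (2*m+1)).r x (Umap (2*m+1) f) := by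
  set g : ((𝔹).iterDual (2*m+1)).X := Umap (2*m+1) f with hg
  -- (1) the V-image of "Φ a" vanishes
  have hVΦ : ∀ a : A, ((D (Unitization.inr (a)) - asCLM 𝔹 (2*m) (((𝔹).iterDual (2*m+1)).l (Unitization.inr (a)) g) + asCLM 𝔹 (2*m) (((𝔹).iterDual (2*m+1)).r (Unitization.inr (a)) g))).comp (Umap (2*m)) = 0 := by
    intro a
    rw [ContinuousLinearMap.add_comp, ContinuousLinearMap.sub_comp]
    have hle : (asCLM 𝔹 (2*m) (((𝔹).iterDual (2*m+1)).l (Unitization.inr a) g)).comp (Umap (2*m))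
        = asCLM 𝔸 (2*m) (((𝔸).iterDual (2*m+1)).l a f) := by
      have h1 := (R_odd m).1 a g
      have h2 : Vmap (2*m+1) g = f := by rw [hg]; exact VU (2*m+1) f
      rw [h2] at h1
      exact h1
    have hre : (asCLM 𝔹 (2*m) (((𝔹).iterDual (2*m+1)).r (Unitization.inr a) g)).comp (Umap (2*m))
        = asCLM 𝔸 (2*m) (((𝔸).iterDual (2*m+1)).r a f) := by
      have h1 := (R_odd m).2 a g
      have h2 : Vmap (2*m+1) g = f := by rw [hg]; exact VU (2*m+1) f
      rw [h2] at h1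
      exact h1
    have hde : (D (Unitization.inr a)).comp (Umap (2*m))
        = asCLM 𝔸 (2*m) (((𝔸).iterDual (2*m+1)).l a f)
          - asCLM 𝔸 (2*m) (((𝔸).iterDual (2*m+1)).r a f) := hf a
    rw [hde, hle, hre]
    abel
  -- (2) "Φ (a*b) = 0"
  have hΦmul : ∀ a b : A, (D (Unitization.inr (a*b)) - asCLM 𝔹 (2*m) (((𝔹).iterDual (2*m+1)).l (Unitization.inr (a*b)) g) + asCLM 𝔹 (2*m) (((𝔹).iterDual (2*m+1)).r (Unitization.inr (a*b)) g)) = 0 := by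
    intro a b
    have hb := (annihilate m (D (Unitization.inr (b)) - asCLM 𝔹 (2*m) (((𝔹).iterDual (2*m+1)).l (Unitization.inr (b)) g) + asCLM 𝔹 (2*m) (((𝔹).iterDual (2*m+1)).r (Unitization.inr (b)) g)) (hVΦ b) a).1
    have ha := (annihilate m (D (Unitization.inr (a)) - asCLM 𝔹 (2*m) (((𝔹).iterDual (2*m+1)).l (Unitization.inr (a)) g) + asCLM 𝔹 (2*m) (((𝔹).iterDual (2*m+1)).r (Unitization.inr (a)) g)) (hVΦ a) b).2
    refine ContinuousLinearMap.ext fun w => ?_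
    have hbw : asCLM 𝔹 (2*m) (((𝔹).iterDual (2*m+1)).l (Unitization.inr a) (D (Unitization.inr (b)) - asCLM 𝔹 (2*m) (((𝔹).iterDual (2*m+1)).l (Unitization.inr (b)) g) + asCLM 𝔹 (2*m) (((𝔹).iterDual (2*m+1)).r (Unitization.inr (b)) g))) w = 0 := by
      rw [hb]; rfl
    have haw : asCLM 𝔹 (2*m) (((𝔹).iterDual (2*m+1)).r (Unitization.inr b) (D (Unitization.inr (a)) - asCLM 𝔹 (2*m) (((𝔹).iterDual (2*m+1)).l (Unitization.inr (a)) g) + asCLM 𝔹 (2*m) (((𝔹).iterDual (2*m+1)).r (Unitization.inr (a)) g))) w = 0 := by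
      rw [ha]; rfl
    have t1 : asCLM 𝔹 (2*m) (((𝔹).iterDual (2*m+1)).l (Unitization.inr a) (D (Unitization.inr (b)) - asCLM 𝔹 (2*m) (((𝔹).iterDual (2*m+1)).l (Unitization.inr (b)) g) + asCLM 𝔹 (2*m) (((𝔹).iterDual (2*m+1)).r (Unitization.inr (b)) g))) w
        = asCLM 𝔹 (2*m) (D (Unitization.inr b)) (((𝔹).iterDual (2*m)).r (Unitization.inr a) w)
          - asCLM 𝔹 (2*m) g (((𝔹).iterDual (2*m)).r (Unitization.inr b)
              (((𝔹).iterDual (2*m)).r (Unitization.inr a) w))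
          + asCLM 𝔹 (2*m) g (((𝔹).iterDual (2*m)).l (Unitization.inr b)
              (((𝔹).iterDual (2*m)).r (Unitization.inr a) w)) := rfl
    have t2 : asCLM 𝔹 (2*m) (((𝔹).iterDual (2*m+1)).r (Unitization.inr b) (D (Unitization.inr (a)) - asCLM 𝔹 (2*m) (((𝔹).iterDual (2*m+1)).l (Unitization.inr (a)) g) + asCLM 𝔹 (2*m) (((𝔹).iterDual (2*m+1)).r (Unitization.inr (a)) g))) w
        = asCLM 𝔹 (2*m) (D (Unitization.inr a)) (((𝔹).iterDual (2*m)).l (Unitization.inr b) w)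
          - asCLM 𝔹 (2*m) g (((𝔹).iterDual (2*m)).r (Unitization.inr a)
              (((𝔹).iterDual (2*m)).l (Unitization.inr b) w))
          + asCLM 𝔹 (2*m) g (((𝔹).iterDual (2*m)).l (Unitization.inr a)
              (((𝔹).iterDual (2*m)).l (Unitization.inr b) w)) := rfl
    rw [t1] at hbw
    rw [t2] at haw
    show asCLM 𝔹 (2*m) (D (Unitization.inr (a*b))) w
        - asCLM 𝔹 (2*m) g (((𝔹).iterDual (2*m)).r (Unitization.inr (a*b)) w)
        + asCLM 𝔹 (2*m) g (((𝔹).iterDual (2*m)).l (Unitization.inr (a*b)) w) = (0 : ℂ)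
    have c1 : asCLM 𝔹 (2*m) (D (Unitization.inr (a*b))) w
        = asCLM 𝔹 (2*m) (D (Unitization.inr b)) (((𝔹).iterDual (2*m)).r (Unitization.inr a) w)
          + asCLM 𝔹 (2*m) (D (Unitization.inr a)) (((𝔹).iterDual (2*m)).l (Unitization.inr b) w) := by
      have e' : D (Unitization.inr (a*b))
          = ((𝔹).iterDual (2*m+1)).l (Unitization.inr a) (D (Unitization.inr b))
            + ((𝔹).iterDual (2*m+1)).r (Unitization.inr b) (D (Unitization.inr a)) := by
        rw [show (Unitization.inr (a*b) : Unitization ℂ A)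
            = Unitization.inr a * Unitization.inr b from Unitization.inr_mul ℂ a b]
        exact hD' _ _
      rw [e']
      rfl
    have c2 : asCLM 𝔹 (2*m) g (((𝔹).iterDual (2*m)).r (Unitization.inr (a*b)) w)
        = asCLM 𝔹 (2*m) g (((𝔹).iterDual (2*m)).r (Unitization.inr b)
            (((𝔹).iterDual (2*m)).r (Unitization.inr a) w)) := by
      refine congrArg (⇑(asCLM 𝔹 (2*m) g)) ?_
      rw [show (Unitization.inr (a*b) : Unitization ℂ A)
          = Unitization.inr a * Unitization.inr b from Unitization.inr_mul ℂ a b]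
      exact (law_mul (2*m)).2 _ _ _
    have c3 : asCLM 𝔹 (2*m) g (((𝔹).iterDual (2*m)).l (Unitization.inr (a*b)) w)
        = asCLM 𝔹 (2*m) g (((𝔹).iterDual (2*m)).l (Unitization.inr a)
            (((𝔹).iterDual (2*m)).l (Unitization.inr b) w)) := by
      refine congrArg (⇑(asCLM 𝔹 (2*m) g)) ?_
      rw [show (Unitization.inr (a*b) : Unitization ℂ A)
          = Unitization.inr a * Unitization.inr b from Unitization.inr_mul ℂ a b]
      exact (law_mul (2*m)).1 _ _ _
    have c4 : asCLM 𝔹 (2*m) g (((𝔹).iterDual (2*m)).l (Unitization.inr b)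
            (((𝔹).iterDual (2*m)).r (Unitization.inr a) w))
        = asCLM 𝔹 (2*m) g (((𝔹).iterDual (2*m)).r (Unitization.inr a)
            (((𝔹).iterDual (2*m)).l (Unitization.inr b) w)) := by
      exact congrArg (⇑(asCLM 𝔹 (2*m) g)) (law_comm (2*m) (Unitization.inr b) (Unitization.inr a) w)
    rw [c1, c2, c3]
    linear_combination hbw + haw - c4
  -- (3) ψ vanishes on products
  have hψprod : ∀ a b : A, asCLM 𝔹 (2*m) (D (Unitization.inr (a*b))) (bhat m 1) = 0 := by
    intro a b
    have h0 := congrArg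
      (fun (L : ((𝔹).iterDual (2*m)).X →L[ℂ] ℂ) => L (bhat m 1)) (hΦmul a b)
    simp only [ContinuousLinearMap.zero_apply] at h0
    have h0' : asCLM 𝔹 (2*m) (D (Unitization.inr (a*b))) (bhat m 1)
        - asCLM 𝔹 (2*m) g (((𝔹).iterDual (2*m)).r (Unitization.inr (a*b)) (bhat m 1))
        + asCLM 𝔹 (2*m) g (((𝔹).iterDual (2*m)).l (Unitization.inr (a*b)) (bhat m 1)) = 0 := h0
    have e2 : asCLM 𝔹 (2*m) g (((𝔹).iterDual (2*m)).r (Unitization.inr (a*b)) (bhat m 1))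
        = asCLM 𝔹 (2*m) g (((𝔹).iterDual (2*m)).l (Unitization.inr (a*b)) (bhat m 1)) := by
      refine congrArg (⇑(asCLM 𝔹 (2*m) g)) ?_
      rw [bhat_r, bhat_l, one_mul, mul_one]
    linear_combination h0' + e2
  -- (4) ψ ≡ 0 by density
  have hψ : ∀ a : A, asCLM 𝔹 (2*m) (D (Unitization.inr a)) (bhat m 1) = 0 := by
    haveI := ((𝔹).iterCSM (inferInstanceAs (ContinuousSMul ℂ (Unitization ℂ A))) (2*m))
    have hcont : Continuous fun a : A => asCLM 𝔹 (2*m) (D (Unitization.inr a)) (bhat m 1) := by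
      have h1 : Continuous fun a : A => D (inclCLM (A := A) a) :=
        D.continuous.comp (inclCLM (A := A)).continuous
      exact (continuous_eval_const (bhat m 1)).comp h1
    have hzero : ∀ x ∈ (Submodule.span ℂ {x : A | ∃ a b : A, x = a * b} : Submodule ℂ A),
        asCLM 𝔹 (2*m) (D (Unitization.inr x)) (bhat m 1) = 0 := by
      intro x hx
      induction hx using Submodule.span_induction with
      | mem y hy =>
        obtain ⟨a, b, rfl⟩ := hy
        exact hψprod a b
      | zero =>
        have e : (Unitization.inr (0:A) : Unitization ℂ A) = 0 := Unitization.inr_zero ℂ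
        rw [e, map_zero]
        rfl
      | add u v hu hv hu' hv' =>
        have e : (Unitization.inr (u + v) : Unitization ℂ A)
            = Unitization.inr u + Unitization.inr v := Unitization.inr_add ℂ u v
        rw [e, map_add]
        show asCLM 𝔹 (2*m) (D (Unitization.inr u)) (bhat m 1)
            + asCLM 𝔹 (2*m) (D (Unitization.inr v)) (bhat m 1) = 0
        rw [hu', hv', add_zero]
      | smul c u hu hu' =>
        have e : (Unitization.inr (c • u) : Unitization ℂ A)
            = c • Unitization.inr u := Unitization.inr_smul ℂ c u
        rw [e, map_smul]
        show c • asCLM 𝔹 (2*m) (D (Unitization.inr u)) (bhat m 1) = 0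
        rw [hu', smul_zero]
    intro a
    have hmem : a ∈ closure
        ((Submodule.span ℂ {x : A | ∃ a b : A, x = a * b} : Submodule ℂ A) : Set A) := hdense a
    have hclosed : IsClosed {x : A | asCLM 𝔹 (2*m) (D (Unitization.inr x)) (bhat m 1) = 0} :=
      isClosed_eq hcont continuous_const
    exact hclosed.closure_subset_iff.mpr hzero hmem
  -- (5) the key pointwise identity on `A`
  have hkey : ∀ a : A, D (Unitization.inr a)
      = ((𝔹).iterDual (2*m+1)).l (Unitization.inr a) g
        - ((𝔹).iterDual (2*m+1)).r (Unitization.inr a) g := by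
    intro a
    refine ContinuousLinearMap.ext fun w => ?_
    obtain ⟨y, c, rfl⟩ := dec m w
    have hcv : (D (Unitization.inr (a)) - asCLM 𝔹 (2*m) (((𝔹).iterDual (2*m+1)).l (Unitization.inr (a)) g) + asCLM 𝔹 (2*m) (((𝔹).iterDual (2*m+1)).r (Unitization.inr (a)) g)) (Umap (2*m) y) = 0 := by
      have hv := congrArg (fun (L : ((𝔸).iterDual (2*m)).X →L[ℂ] ℂ) => L y) (hVΦ a)
      simpa using hv
    have he : (D (Unitization.inr (a)) - asCLM 𝔹 (2*m) (((𝔹).iterDual (2*m+1)).l (Unitization.inr (a)) g) + asCLM 𝔹 (2*m) (((𝔹).iterDual (2*m+1)).r (Unitization.inr (a)) g)) (bhat m 1) = 0 := by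
      have e2 : asCLM 𝔹 (2*m) g (((𝔹).iterDual (2*m)).r (Unitization.inr a) (bhat m 1))
          = asCLM 𝔹 (2*m) g (((𝔹).iterDual (2*m)).l (Unitization.inr a) (bhat m 1)) := by
        refine congrArg (⇑(asCLM 𝔹 (2*m) g)) ?_
        rw [bhat_r, bhat_l, one_mul, mul_one]
      have hp : asCLM 𝔹 (2*m) (D (Unitization.inr a)) (bhat m 1)
          - asCLM 𝔹 (2*m) g (((𝔹).iterDual (2*m)).r (Unitization.inr a) (bhat m 1))
          + asCLM 𝔹 (2*m) g (((𝔹).iterDual (2*m)).l (Unitization.inr a) (bhat m 1))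
          = (D (Unitization.inr (a)) - asCLM 𝔹 (2*m) (((𝔹).iterDual (2*m+1)).l (Unitization.inr (a)) g) + asCLM 𝔹 (2*m) (((𝔹).iterDual (2*m+1)).r (Unitization.inr (a)) g)) (bhat m 1) := rfl
      rw [← hp, hψ a]
      linear_combination -e2
    have hw : (D (Unitization.inr (a)) - asCLM 𝔹 (2*m) (((𝔹).iterDual (2*m+1)).l (Unitization.inr (a)) g) + asCLM 𝔹 (2*m) (((𝔹).iterDual (2*m+1)).r (Unitization.inr (a)) g)) (Umap (2*m) y + c • bhat m 1) = 0 := by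
      rw [map_add, map_smul, hcv, he, smul_zero, add_zero]
    have hexp : asCLM 𝔹 (2*m) (D (Unitization.inr a)) (Umap (2*m) y + c • bhat m 1)
        - asCLM 𝔹 (2*m) g (((𝔹).iterDual (2*m)).r (Unitization.inr a)
            (Umap (2*m) y + c • bhat m 1))
        + asCLM 𝔹 (2*m) g (((𝔹).iterDual (2*m)).l (Unitization.inr a)
            (Umap (2*m) y + c • bhat m 1)) = 0 := hw
    show asCLM 𝔹 (2*m) (D (Unitization.inr a)) (Umap (2*m) y + c • bhat m 1)
        = asCLM 𝔹 (2*m) g (((𝔹).iterDual (2*m)).r (Unitization.inr a)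
            (Umap (2*m) y + c • bhat m 1))
          - asCLM 𝔹 (2*m) g (((𝔹).iterDual (2*m)).l (Unitization.inr a)
            (Umap (2*m) y + c • bhat m 1))
    linear_combination hexp
  -- (6) conclusion
  have hD1 : D 1 = 0 := by
    have e := hD' 1 1
    rw [one_mul, (law_one (2*m+1)).1 (D 1), (law_one (2*m+1)).2 (D 1)] at e
    have h2 : D 1 + D 1 = 0 + D 1 := by rw [zero_add]; exact e.symm
    exact (add_right_cancel h2).symm ▸ rfl
  intro x
  have hx : x = x.fst • (1 : Unitization ℂ A) + Unitization.inr (x.snd) := by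
    ext <;> simp
  calc D x = x.fst • D 1 + D (Unitization.inr (x.snd)) := by
        conv_lhs => rw [hx]
        rw [map_add, map_smul]
    _ = D (Unitization.inr (x.snd)) := by
        rw [hD1]
        show x.fst • (0 : ((𝔹).iterDual (2*m)).X →L[ℂ] ℂ)
            + D (Unitization.inr (x.snd)) = D (Unitization.inr (x.snd))
        have hz : x.fst • (0 : ((𝔹).iterDual (2*m)).X →L[ℂ] ℂ) = 0 := by
          ext z
          simp
        rw [hz, zero_add]
    _ = (show ((𝔹).iterDual (2*m)).X →L[ℂ] ℂ from ((𝔹).iterDual (2*m+1)).l (Unitization.inr (x.snd)) g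
          - ((𝔹).iterDual (2*m+1)).r (Unitization.inr (x.snd)) g) :=
        hkey (x.snd)
    _ = (show ((𝔹).iterDual (2*m)).X →L[ℂ] ℂ from ((𝔹).iterDual (2*m+1)).l x g - ((𝔹).iterDual (2*m+1)).r x g) := by
        conv_rhs => rw [hx]
        rw [(law_add (2*m+1)).1, (law_add (2*m+1)).2,
          (law_smul (2*m+1)).1, (law_smul (2*m+1)).2,
          (law_one (2*m+1)).1, (law_one (2*m+1)).2]
        abel_nf
        rfl

end Aux

set_option maxHeartbeats 1000000 in
set_option synthInstance.maxHeartbeats 400000 in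
/-- If a non-unital Montel Fréchet algebra `A` is `(2n-1)`-weakly amenable (`n ≥ 1`),
then its unitization `A#` is `(2n-1)`-weakly amenable. -/
theorem nWeaklyAmenable_odd_unitization_of (A : Type) [NonUnitalRing A] [Module ℂ A] [SMulCommClass ℂ A A]
    [IsScalarTower ℂ A A] [UniformSpace A] [IsUniformAddGroup A] [ContinuousSMul ℂ A]
    [ContinuousMul A] [CompleteSpace A] [T2Space A] (hA : FrechetSeminorms A)
    (hnu : ¬ HasIdentity A) (hMontel : IsMontelSpace A) (n : ℕ) (hn : 1 ≤ n)
    (h : NWeaklyAmenable A (2 * n - 1)) :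
    NWeaklyAmenable (Unitization ℂ A) (2 * n - 1) := by
  obtain ⟨m, rfl⟩ : ∃ m, n = m + 1 := ⟨n - 1, by omega⟩
  intro D hD
  have hD' : ∀ x y : Unitization ℂ A,
      D (x * y) = ((selfBiMod (Unitization ℂ A)).iterDual (2*m+1)).l x (D y)
        + ((selfBiMod (Unitization ℂ A)).iterDual (2*m+1)).r y (D x) := hD
  have hder : IsContDerivation A ((selfBiMod A).iterDual (2*m+1))
      ((Vmap (A := A) (2*m+1)).comp (D.comp (inclCLM (A := A)))) := by
    intro a b
    have e1 : ((Vmap (A := A) (2*m+1)).comp (D.comp (inclCLM (A := A)))) (a * b)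
        = Vmap (A := A) (2*m+1) (D (Unitization.inr a * Unitization.inr b)) := by
      show Vmap (A := A) (2*m+1) (D (Unitization.inr (a*b))) = _
      rw [Unitization.inr_mul]
    rw [e1, hD' (Unitization.inr a) (Unitization.inr b), map_add,
      (R_odd m).1 a (D (Unitization.inr b)), (R_odd m).2 b (D (Unitization.inr a))]
    rfl
  have hf0 : ∃ f : ((selfBiMod A).iterDual (2*m+1)).X, ∀ a : A,
      ((Vmap (A := A) (2*m+1)).comp (D.comp (inclCLM (A := A)))) a
        = ((selfBiMod A).iterDual (2*m+1)).l a f - ((selfBiMod A).iterDual (2*m+1)).r a f :=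
    h _ hder
  obtain ⟨f, hf0⟩ := hf0
  have hf : ∀ a : A, Vmap (A := A) (2*m+1) (D (Unitization.inr a))
      = ((selfBiMod A).iterDual (2*m+1)).l a f - ((selfBiMod A).iterDual (2*m+1)).r a f :=
    fun a => hf0 a
  have hdense := dense_products (A := A) hMontel.1 m h
  have hmain := main_key (A := A) m D hD' f hf hdense
  exact ⟨Umap (A := A) (2*m+1) f, hmain⟩
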